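/- Let G be a finite simple graph and let H be the 1-subdivision of G. Then vi(H) ≤ (vi(G))². -/

import Mathlib

open SimpleGraph

/-- `S` is a vi(k)-set of the graph `G`. -/
def IsVISet {V : Type*} (G : SimpleGraph V) (k : ℕ) (S : Finset V) : Prop :=
  S.card ≤ k ∧
    ∀ c : (G.induce {v : V | v ∉ S}).ConnectedComponent,
      Nat.card c.supp ≤ k - S.card

/-- The vertex integrity of `G`: the minimum `k` such that `G` has a vi(k)-set. -/
noncomputable def vertexIntegrity {V : Type*} [Fintype V] (G : SimpleGraph V) : ℕ :=
  sInf {k : ℕ | ∃ S : Finset V, IsVISet G k S}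

/-- The 1-subdivision of `G`: every edge `e = {u,w}` is replaced by a path
`u - v_e - w` through a new vertex `v_e` (the original edges are removed). -/
def oneSubdivision {V : Type*} (G : SimpleGraph V) : SimpleGraph (V ⊕ G.edgeSet) where
  Adj x y :=
    match x, y with
    | Sum.inl u, Sum.inr e => u ∈ (e : Sym2 V)
    | Sum.inr e, Sum.inl u => u ∈ (e : Sym2 V)
    | Sum.inl _, Sum.inl _ => False
    | Sum.inr _, Sum.inr _ => False
  symm := by
    constructor
    rintro (u | e) (v | f) h
    · exact h.elim
    · exact h
    · exact h
    · exact h.elim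
  loopless := by
    constructor
    rintro (u | e) h
    · exact h
    · exact h

private lemma aux_sq {t k : ℕ} (h : t ≤ k) : t * t - t ≤ k * k - k := by
  have h1 : t * (t - 1) ≤ k * (k - 1) :=
    Nat.mul_le_mul h (Nat.sub_le_sub_right h 1)
  have e1 : t * (t - 1) = t * t - t := Nat.mul_pred t t
  have e2 : k * (k - 1) = k * k - k := Nat.mul_pred k k
  omega

theorem stmt_5 {V : Type*} [Fintype V] [DecidableEq V] (G : SimpleGraph V)
    [DecidableRel G.Adj] :
    vertexIntegrity (oneSubdivision G) ≤ (vertexIntegrity G) ^ 2 := by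
  classical
  set k := vertexIntegrity G with hkdef
  -- the defining set for G is nonempty
  have hne : {n : ℕ | ∃ S : Finset V, IsVISet G n S}.Nonempty := by
    refine ⟨Fintype.card V, Finset.univ, Finset.card_univ.le, fun c => ?_⟩
    obtain ⟨⟨w, hw⟩, -⟩ := c.exists_rep
    exact absurd (Finset.mem_univ w) hw
  obtain ⟨S, hScard, hScomp⟩ : ∃ S : Finset V, IsVISet G k S := Nat.sInf_mem hne
  set s := S.card with hsdef
  have hk2 : k ≤ k ^ 2 := Nat.le_self_pow two_ne_zero k
  have hkk : k ^ 2 = k * k := sq k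
  -- the vi(k²)-set for the subdivision
  set S' : Finset (V ⊕ G.edgeSet) := S.image Sum.inl with hS'def
  have hS'card : S'.card = s := Finset.card_image_of_injective _ Sum.inl_injective
  have hinl : ∀ u : V, Sum.inl u ∈ S' ↔ u ∈ S := by
    intro u; simp [hS'def, Sum.inl_injective.eq_iff]
  have hinr : ∀ e : G.edgeSet, (Sum.inr e : V ⊕ G.edgeSet) ∉ S' := by
    intro e he; simp [hS'def] at he
  set T : Set (V ⊕ G.edgeSet) := {x | x ∉ S'} with hTdef
  set H' := (oneSubdivision G).induce T with hH'def
  set G' := G.induce {v : V | v ∉ S} with hG'def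
  refine Nat.sInf_le ⟨S', hS'card.le.trans (hScard.trans hk2), fun c => ?_⟩
  rw [hS'card]
  -- case analysis on a representative of c
  obtain ⟨x, hx⟩ := c.exists_rep
  by_cases hbase : ∃ (v0 : V) (h : Sum.inl v0 ∈ T), H'.connectedComponentMk ⟨Sum.inl v0, h⟩ = c
  · -- main case
    obtain ⟨v0, hv0T, hv0c⟩ := hbase
    have hv0 : v0 ∉ S := fun h => hv0T ((hinl v0).mpr h)
    set v' : {v : V | v ∉ S} := ⟨v0, hv0⟩ with hv'def
    set C := G'.connectedComponentMk v' with hCdef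
    have hCcard : Nat.card C.supp ≤ k - s := hScomp C
    -- the invariant
    set Q : ↥T → Prop := fun y =>
      match y.1 with
      | Sum.inl w => ∃ h : w ∉ S, G'.Reachable v' ⟨w, h⟩
      | Sum.inr f => ∀ u, u ∈ (f : Sym2 V) → u ∈ S ∨ ∃ h : u ∉ S, G'.Reachable v' ⟨u, h⟩
      with hQdef
    have step : ∀ a b : ↥T, Q a → H'.Adj a b → Q b := by
      rintro ⟨(w | f), haT⟩ ⟨(w' | f'), hbT⟩ hQa hab
      · exact absurd hab (by simp [hH'def, oneSubdivision])
      · -- inl w to inr f'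
        have hwf : w ∈ (f' : Sym2 V) := hab
        obtain ⟨hw, hreach⟩ := hQa
        intro u hu
        by_cases hus : u ∈ S
        · exact Or.inl hus
        · refine Or.inr ⟨hus, ?_⟩
          by_cases huw : u = w
          · subst huw; exact hreach
          · have hf : (f' : Sym2 V) = s(u, w) := (Sym2.mem_and_mem_iff huw).mp ⟨hu, hwf⟩
            have hadj : G.Adj u w := by
              have := f'.2; rw [hf] at this; exact this
            have : G'.Adj ⟨w, hw⟩ ⟨u, hus⟩ := hadj.symm
            exact hreach.trans this.reachable
      · -- inr f to inl w'
        have hwf : w' ∈ (f : Sym2 V) := hab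
        have hw' : w' ∉ S := fun h => hbT ((hinl w').mpr h)
        rcases hQa w' hwf with h | ⟨h, hr⟩
        · exact absurd h hw'
        · exact ⟨hw', hr⟩
      · exact absurd hab (by simp [hH'def, oneSubdivision])
    have key : ∀ y : ↥T, y ∈ c.supp → Q y := by
      intro y hy
      have hreach : H'.Reachable ⟨Sum.inl v0, hv0T⟩ y := by
        rw [ConnectedComponent.mem_supp_iff] at hy
        exact ConnectedComponent.eq.mp (hv0c.trans hy.symm)
      obtain ⟨p⟩ := hreach
      have walkind : ∀ (a b : ↥T) (p : H'.Walk a b), Q a → Q b := by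
        intro a b p
        induction p with
        | nil => exact id
        | cons h q ih => exact fun ha => ih (step _ _ ha h)
      exact walkind _ _ p ⟨hv0, Reachable.refl v'⟩
    -- the finite sets
    set Cfin : Finset V :=
      Finset.univ.filter (fun u => ∃ h : u ∉ S, G'.Reachable v' ⟨u, h⟩) with hCfin
    have hCfincard : Cfin.card ≤ k - s := by
      have hsub : (↑Cfin : Set V) ⊆ Subtype.val '' C.supp := by
        rintro u hu
        rw [Finset.coe_filter] at hu
        obtain ⟨-, h, hr⟩ := hu
        exact ⟨⟨u, h⟩, (C.mem_supp_iff _).mpr (ConnectedComponent.eq.mpr hr.symm), rfl⟩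
      calc Cfin.card = (↑Cfin : Set V).ncard := (Set.ncard_coe_finset _).symm
        _ ≤ (Subtype.val '' C.supp).ncard :=
            Set.ncard_le_ncard hsub ((C.supp.toFinite).image _)
        _ = C.supp.ncard := Set.ncard_image_of_injective _ Subtype.val_injective
        _ = Nat.card C.supp := (Nat.card_coe_set_eq _).symm
        _ ≤ k - s := hCcard
    set K : Finset V := S ∪ Cfin with hKdef
    have hKcard : K.card ≤ k := by
      have h1 : K.card ≤ s + Cfin.card := Finset.card_union_le S Cfin
      have hsk : s ≤ k := hScard
      omega
    -- the injection
    set q : ↥T → V ⊕ (V × V) :=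
      (Sum.map id (fun f : G.edgeSet => Quot.out (f : Sym2 V))) ∘ Subtype.val with hqdef
    have hqinj : Function.Injective q := by
      refine (Function.Injective.sumMap (fun a b h => h) ?_).comp Subtype.val_injective
      intro f g h
      have h' : Quot.out (f : Sym2 V) = Quot.out (g : Sym2 V) := h
      apply Subtype.ext
      rw [← Quot.out_eq (f : Sym2 V), ← Quot.out_eq (g : Sym2 V)]
      exact congrArg _ h'
    set D : Finset (V ⊕ (V × V)) := Cfin.image Sum.inl ∪ K.offDiag.image Sum.inr with hDdef
    have himg : q '' c.supp ⊆ ↑D := by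
      rintro _ ⟨y, hy, rfl⟩
      have hQy := key y hy
      rcases y with ⟨(w | f), hyT⟩
      · obtain ⟨h, hr⟩ := hQy
        refine Finset.mem_coe.mpr (Finset.mem_union_left _ ?_)
        exact Finset.mem_image.mpr ⟨w, Finset.mem_filter.mpr ⟨Finset.mem_univ _, h, hr⟩, rfl⟩
      · refine Finset.mem_coe.mpr (Finset.mem_union_right _ ?_)
        refine Finset.mem_image.mpr ⟨Quot.out (f : Sym2 V), ?_, rfl⟩
        have h1 := Sym2.out_fst_mem (f : Sym2 V)
        have h2 := Sym2.out_snd_mem (f : Sym2 V)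
        have hmemK : ∀ u, u ∈ (f : Sym2 V) → u ∈ K := by
          intro u hu
          rcases hQy u hu with h | ⟨h, hr⟩
          · exact Finset.mem_union_left _ h
          · exact Finset.mem_union_right _
              (Finset.mem_filter.mpr ⟨Finset.mem_univ _, h, hr⟩)
        have hne' : (Quot.out (f : Sym2 V)).1 ≠ (Quot.out (f : Sym2 V)).2 := by
          intro h
          apply G.not_isDiag_of_mem_edgeSet f.2
          rw [← Quot.out_eq (f : Sym2 V)]
          exact Sym2.mk_isDiag_iff.mpr h
        exact Finset.mem_offDiag.mpr ⟨hmemK _ h1, hmemK _ h2, hne'⟩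
    have hDcard : D.card ≤ (k - s) + (k * k - k) := by
      calc D.card ≤ (Cfin.image Sum.inl).card + (K.offDiag.image Sum.inr).card :=
            Finset.card_union_le _ _
        _ ≤ Cfin.card + K.offDiag.card := by
            gcongr <;> exact Finset.card_image_le
        _ ≤ (k - s) + (k * k - k) := by
            have h1 := Finset.offDiag_card K
            have h2 := aux_sq hKcard
            omega
    calc Nat.card c.supp = c.supp.ncard := Nat.card_coe_set_eq _
      _ = (q '' c.supp).ncard := (Set.ncard_image_of_injective _ hqinj).symm
      _ ≤ (↑D : Set (V ⊕ (V × V))).ncard := Set.ncard_le_ncard himg (D.finite_toSet)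
      _ = D.card := Set.ncard_coe_finset _
      _ ≤ (k - s) + (k * k - k) := hDcard
      _ ≤ k ^ 2 - s := by
        have hsk : s ≤ k := hScard
        omega
  · -- isolated subdivision vertex case
    obtain ⟨(w | e), hxT⟩ := x
    · exact absurd ⟨w, hxT, hx⟩ hbase
    · -- every endpoint of e is in S
      have hends : ∀ u, u ∈ (e : Sym2 V) → u ∈ S := by
        intro u hu
        by_contra hus
        have huT : (Sum.inl u : V ⊕ G.edgeSet) ∈ T := fun h => hus ((hinl u).mp h)
        have hadj : H'.Adj ⟨Sum.inl u, huT⟩ ⟨Sum.inr e, hxT⟩ := hu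
        exact hbase ⟨u, huT, (ConnectedComponent.eq.mpr
          (hadj.reachable.trans (Reachable.refl _))).trans hx⟩
      -- hence s ≥ 2 and the component is a singleton
      have hs2 : 2 ≤ s := by
        have h1 := hends _ (Sym2.out_fst_mem (e : Sym2 V))
        have h2 := hends _ (Sym2.out_snd_mem (e : Sym2 V))
        have hne' : (Quot.out (e : Sym2 V)).1 ≠ (Quot.out (e : Sym2 V)).2 := by
          intro h
          apply G.not_isDiag_of_mem_edgeSet e.2
          rw [← Quot.out_eq (e : Sym2 V)]
          exact Sym2.mk_isDiag_iff.mpr h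
        have : ({(Quot.out (e : Sym2 V)).1, (Quot.out (e : Sym2 V)).2} : Finset V) ⊆ S := by
          intro u hu
          rw [Finset.mem_insert, Finset.mem_singleton] at hu
          rcases hu with rfl | rfl
          exacts [h1, h2]
        calc 2 = ({(Quot.out (e : Sym2 V)).1, (Quot.out (e : Sym2 V)).2} : Finset V).card := by
              rw [Finset.card_insert_of_notMem (by simpa using hne'), Finset.card_singleton]
          _ ≤ s := Finset.card_le_card this
      have hsingle : c.supp ⊆ {⟨Sum.inr e, hxT⟩} := by
        intro y hy
        rw [ConnectedComponent.mem_supp_iff] at hy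
        have hr : H'.Reachable ⟨Sum.inr e, hxT⟩ y := ConnectedComponent.eq.mp (hx.trans hy.symm)
        obtain ⟨p⟩ := hr
        cases p with
        | nil => rfl
        | cons h q =>
          exfalso
          rename_i b
          obtain ⟨(u | f), hbT⟩ := b
          · have hu : u ∈ (e : Sym2 V) := h
            exact hbT ((hinl u).mpr (hends u hu))
          · exact h.elim
      have h1 : Nat.card c.supp ≤ 1 := by
        calc Nat.card c.supp = c.supp.ncard := Nat.card_coe_set_eq _
          _ ≤ ({⟨Sum.inr e, hxT⟩} : Set ↥T).ncard :=
              Set.ncard_le_ncard hsingle (Set.finite_singleton _)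
          _ = 1 := Set.ncard_singleton _
      have hsk : s ≤ k := hScard
      have : 2 * k ≤ k * k := Nat.mul_le_mul_right k (by omega)
      omega
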